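/- Let $l_0 \geq 1$, $m_0 \geq 0$ be natural numbers and let $d : \mathbb{N} \times \mathbb{N} \to \mathbb{R}$ satisfy the homogeneous relation $(ii)H$: $d_{l+1,m+1} - d_{l,m} - d_{l,m+1} + d_{l-1,m} = 0$ for all $l \geq l_0$ and $m \geq m_0$. Then for all $k \geq 1$ and $j \geq 0$ one has $d_{l_0-1+j+k,\,m_0+j} - d_{l_0-2+j+k,\,m_0+j} = d_{l_0-1+k,\,m_0} - d_{l_0-2+k,\,m_0}$. -/
import Mathlib

/-- Main identity in the proof of Theorem 1, part 2: under the homogeneous relation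
`(ii)H`, the horizontal first difference along row `m₀ + j`, shifted by `j`,
equals the horizontal first difference along row `m₀`. -/
theorem stmt_5 (l₀ m₀ : ℕ) (hl₀ : 1 ≤ l₀) (d : ℕ × ℕ → ℝ)
    (h : ∀ l m : ℕ, l₀ ≤ l → m₀ ≤ m →
      d (l + 1, m + 1) - d (l, m) - d (l, m + 1) + d (l - 1, m) = 0) :
    ∀ k j : ℕ, 1 ≤ k →
      d (l₀ + j + k - 1, m₀ + j) - d (l₀ + j + k - 2, m₀ + j) =
        d (l₀ + k - 1, m₀) - d (l₀ + k - 2, m₀) := by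
  intro k j hk
  induction j with
  | zero => rfl
  | succ j ih =>
    have hrel := h (l₀ + j + k - 1) (m₀ + j) (by omega) (by omega)
    have e1 : l₀ + j + k - 1 + 1 = l₀ + (j + 1) + k - 1 := by omega
    have e2 : l₀ + j + k - 1 = l₀ + (j + 1) + k - 2 := by omega
    have e3 : l₀ + j + k - 1 - 1 = l₀ + j + k - 2 := by omega
    have e4 : m₀ + j + 1 = m₀ + (j + 1) := by omega
    rw [e1, e3, e2, e4] at hrel
    rw [e2] at ih
    linarith
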